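/- Let G be an abelian Polish group with a compatible translation-invariant complete metric, (t_k)_{k≥1} a good sequence in G, and (A_k)_{k≥0} a decreasing sequence of subsets of ℕ with A₀ = ℕ and A_k \ A_{k+1} infinite for all k ≥ 0. Fix k, l ≥ 1 and let U = {∑_{i=0}^{l−1} α_i·t_{k+i} : α_i ∈ {0,1}, and α_i = 0 whenever k+i ∈ A_k}. Then C_k is the union of the finitely many translates C⁰_{k,l} + u for u ∈ U, and these translates are pairwise disjoint. -/

import Mathlib

open Set TopologicalSpace

/-- `p(σ) = ∑ₖ σ(k)·t k` for `σ ∈ {0,1}^ℕ`. -/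
noncomputable def pSum {G : Type*} [AddCommGroup G] [TopologicalSpace G]
    (t : ℕ → G) (σ : ℕ → Bool) : G :=
  ∑' k, if σ k then t k else 0

section Aux

variable {G : Type*} [AddCommGroup G] [MetricSpace G] [CompleteSpace G] [IsTopologicalAddGroup G]

lemma dist_zero_add_le' (hmetinv : ∀ a b u : G, dist (a + u) (b + u) = dist a b)
    (a b : G) : dist 0 (a + b) ≤ dist 0 a + dist 0 b := by
  have h : dist a (a + b) = dist 0 b := by
    have := hmetinv 0 b a
    simpa [zero_add, add_comm] using this
  calc dist 0 (a + b) ≤ dist 0 a + dist a (a + b) := dist_triangle _ _ _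
    _ = dist 0 a + dist 0 b := by rw [h]

lemma dist_zero_sum_le' (hmetinv : ∀ a b u : G, dist (a + u) (b + u) = dist a b)
    (f : ℕ → G) (s : Finset ℕ) : dist 0 (∑ i ∈ s, f i) ≤ ∑ i ∈ s, dist 0 (f i) := by
  classical
  induction s using Finset.induction_on with
  | empty => simp
  | insert a s' hx ih =>
    rw [Finset.sum_insert hx, Finset.sum_insert hx]
    exact le_trans (dist_zero_add_le' hmetinv _ _) (by linarith)

lemma summable_aux (hmetinv : ∀ a b u : G, dist (a + u) (b + u) = dist a b)
    (t : ℕ → G) (hsum : Summable fun k => dist (0 : G) (t k)) (σ : ℕ → Bool) :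
    Summable (fun i => if σ i then t i else 0) := by
  classical
  rw [summable_iff_cauchySeq_finset]
  rw [Metric.cauchySeq_iff']
  intro ε hε
  obtain ⟨s₀, hs₀⟩ := hsum.vanishing (Metric.ball_mem_nhds 0 hε)
  refine ⟨s₀, fun s hs => ?_⟩
  have hsplit : ∑ i ∈ s, (if σ i then t i else 0) =
      (∑ i ∈ s \ s₀, (if σ i then t i else 0)) + ∑ i ∈ s₀, (if σ i then t i else 0) :=
    (Finset.sum_sdiff hs).symm
  rw [hsplit]
  have h1 : dist ((∑ i ∈ s \ s₀, (if σ i then t i else 0)) + ∑ i ∈ s₀, (if σ i then t i else 0))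
      (∑ i ∈ s₀, (if σ i then t i else 0))
      = dist (∑ i ∈ s \ s₀, (if σ i then t i else 0)) 0 := by
    have := hmetinv (∑ i ∈ s \ s₀, (if σ i then t i else 0)) 0
      (∑ i ∈ s₀, (if σ i then t i else 0))
    simpa using this
  rw [h1, dist_comm]
  have h2 : dist (0:G) (∑ i ∈ s \ s₀, (if σ i then t i else 0))
      ≤ ∑ i ∈ s \ s₀, dist (0:G) (if σ i then t i else 0) := dist_zero_sum_le' hmetinv _ _
  have h3 : ∑ i ∈ s \ s₀, dist (0:G) (if σ i then t i else 0)
      ≤ ∑ i ∈ s \ s₀, dist (0:G) (t i) := by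
    refine Finset.sum_le_sum fun i _ => ?_
    by_cases h : σ i <;> simp [h, dist_nonneg]
  have h4 := hs₀ (s \ s₀) (Finset.sdiff_disjoint)
  rw [Metric.mem_ball, Real.dist_eq, sub_zero] at h4
  have h5 : ∑ i ∈ s \ s₀, dist (0:G) (t i) < ε := lt_of_le_of_lt (le_abs_self _) h4
  linarith

lemma pSum_split (hmetinv : ∀ a b u : G, dist (a + u) (b + u) = dist a b)
    (t : ℕ → G) (hsum : Summable fun k => dist (0 : G) (t k)) (k l : ℕ)
    (σ τ : ℕ → Bool)
    (h1 : ∀ i, k ≤ i → i < k + l → σ i = false)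
    (h2 : ∀ i, ¬(k ≤ i ∧ i < k + l) → τ i = σ i) :
    pSum t τ = pSum t σ + ∑ i : Fin l, (if τ (k + (i : ℕ)) then t (k + (i : ℕ)) else 0) := by
  classical
  set h : ℕ → G := fun i => if k ≤ i ∧ i < k + l then (if τ i then t i else 0) else 0 with hh
  have hfs : Summable (fun i => if σ i then t i else 0) := summable_aux hmetinv t hsum σ
  have hhz : ∀ b ∉ Finset.Ico k (k + l), h b = 0 := by
    intro b hb
    rw [Finset.mem_Ico] at hb
    simp only [hh]
    rw [if_neg hb]
  have hhs : Summable h := summable_of_ne_finset_zero hhz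
  have hpt : ∀ i, (if τ i then t i else (0:G)) = (if σ i then t i else 0) + h i := by
    intro i
    by_cases hi : k ≤ i ∧ i < k + l
    · simp only [hh, if_pos hi, h1 i hi.1 hi.2]
      simp
    · simp only [hh, if_neg hi, h2 i hi]
      simp
  have : pSum t τ = pSum t σ + ∑' i, h i := by
    rw [pSum, pSum, tsum_congr hpt, Summable.tsum_add hfs hhs]
  rw [this]
  congr 1
  rw [tsum_eq_sum hhz]
  have : ∑ i ∈ Finset.Ico k (k + l), h i
      = ∑ i ∈ Finset.Ico k (k + l), (if τ i then t i else 0) := by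
    refine Finset.sum_congr rfl fun i hi => ?_
    rw [Finset.mem_Ico] at hi
    simp only [hh, if_pos hi]
  rw [this, Finset.sum_Ico_eq_sum_range]
  simp only [Nat.add_sub_cancel_left]
  exact (Fin.sum_univ_eq_sum_range (fun j => if τ (k + j) then t (k + j) else 0) l).symm

end Aux


/-- `B_k = {σ ∈ {0,1}^ℕ : σ(i) = 0 if i < k or i ∈ A_k}`. -/
def BSet (A : ℕ → Set ℕ) (k : ℕ) : Set (ℕ → Bool) :=
  {σ | ∀ i : ℕ, (i < k ∨ i ∈ A k) → σ i = false}

/-- `B⁰_{k,l} = {σ ∈ B_k : σ(k) = ⋯ = σ(k+l-1) = 0}`. -/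
def BSet0 (A : ℕ → Set ℕ) (k l : ℕ) : Set (ℕ → Bool) :=
  {σ | σ ∈ BSet A k ∧ ∀ i : ℕ, k ≤ i → i < k + l → σ i = false}

/-- `D_{k,l} = {τ ∈ {0,1}^ℕ : τ(s) = 0 if s < k + l or s ∉ A_k \ A_{k+l}}`. -/
def DSet (A : ℕ → Set ℕ) (k l : ℕ) : Set (ℕ → Bool) :=
  {τ | ∀ s : ℕ, (s < k + l ∨ s ∉ A k \ A (k + l)) → τ s = false}

/-- With `(t k)` a good sequence in an abelian Polish group `G` (with
compatible translation-invariant complete metric) and `(A k)` a decreasing sequence of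
subsets of `ℕ` with `A 0 = ℕ` and `A k \ A (k+1)` infinite, for fixed `k, l ≥ 1` and
`U = {∑_{i<l} αᵢ·t(k+i) : αᵢ ∈ {0,1}, αᵢ = 0 whenever k+i ∈ A_k}`, the set `C_k` is the
union of the finitely many translates `C⁰_{k,l} + u`, `u ∈ U`, and these translates are
pairwise disjoint. -/
theorem stmt_19 {G : Type*} [AddCommGroup G] [MetricSpace G] [CompleteSpace G]
    [SeparableSpace G] [IsTopologicalAddGroup G]
    (hmetinv : ∀ a b u : G, dist (a + u) (b + u) = dist a b)
    (t : ℕ → G) (htinj : Function.Injective t)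
    (hsum : Summable fun k => dist (0 : G) (t k))
    (hgood : Function.Injective (pSum t))
    (A : ℕ → Set ℕ) (hA0 : A 0 = Set.univ)
    (hAdec : ∀ k, A (k + 1) ⊆ A k)
    (hAinf : ∀ k, (A k \ A (k + 1)).Infinite)
    (k l : ℕ) (hk : 1 ≤ k) (hl : 1 ≤ l)
    (U : Set G)
    (hU : U = {u : G | ∃ α : Fin l → Bool, (∀ i : Fin l, k + (i : ℕ) ∈ A k → α i = false) ∧
        u = ∑ i : Fin l, if α i then t (k + (i : ℕ)) else 0}) :
    U.Finite ∧
    pSum t '' BSet A k = (⋃ u ∈ U, (fun x => x + u) '' (pSum t '' BSet0 A k l)) ∧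
    (∀ u₁ ∈ U, ∀ u₂ ∈ U, u₁ ≠ u₂ →
      Disjoint ((fun x => x + u₁) '' (pSum t '' BSet0 A k l))
        ((fun x => x + u₂) '' (pSum t '' BSet0 A k l))) := by
  classical
  -- the map from coefficient vectors to group elements
  set F : (Fin l → Bool) → G := fun α => ∑ i : Fin l, if α i then t (k + (i : ℕ)) else 0 with hF
  have hUfin : U.Finite := by
    refine (Set.finite_range F).subset ?_
    rintro u hu
    rw [hU] at hu
    obtain ⟨α, -, rfl⟩ := hu
    exact ⟨α, rfl⟩
  refine ⟨hUfin, ?_, ?_⟩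
  · ext x
    constructor
    · rintro ⟨σ, hσ, rfl⟩
      set σ' : ℕ → Bool := fun i => if k ≤ i ∧ i < k + l then false else σ i with hσ'
      have h1 : ∀ i, k ≤ i → i < k + l → σ' i = false := by
        intro i hi1 hi2
        simp only [hσ']
        simp [hi1, hi2]
      have h2 : ∀ i, ¬(k ≤ i ∧ i < k + l) → σ i = σ' i := fun i hi => by
        simp only [hσ', if_neg hi]
      have hsplit := pSum_split hmetinv t hsum k l σ' σ h1 h2
      set α : Fin l → Bool := fun i => σ (k + (i : ℕ)) with hα
      have huU : F α ∈ U := by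
        rw [hU]
        refine ⟨α, fun i hi => hσ _ (Or.inr hi), rfl⟩
      have hσ'mem : σ' ∈ BSet0 A k l := by
        refine ⟨fun i hi => ?_, h1⟩
        by_cases hir : k ≤ i ∧ i < k + l
        · simp only [hσ', if_pos hir]
        · simp only [hσ', if_neg hir]
          exact hσ i hi
      rw [Set.mem_iUnion₂]
      refine ⟨F α, huU, pSum t σ', ⟨σ', hσ'mem, rfl⟩, ?_⟩
      show pSum t σ' + F α = pSum t σ
      exact hsplit.symm
    · intro hx
      rw [Set.mem_iUnion₂] at hx
      obtain ⟨u, huU, y, ⟨σ', hσ'0, rfl⟩, rfl⟩ := hx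
      rw [hU] at huU
      obtain ⟨α, hα0, rfl⟩ := huU
      set τ : ℕ → Bool := fun i =>
        if hi : k ≤ i ∧ i < k + l then α ⟨i - k, by omega⟩ else σ' i with hτ
      have h2 : ∀ i, ¬(k ≤ i ∧ i < k + l) → τ i = σ' i := fun i hi => by
        simp only [hτ, dif_neg hi]
      have hτk : ∀ i : Fin l, τ (k + (i : ℕ)) = α i := by
        intro i
        have hir : k ≤ k + (i : ℕ) ∧ k + (i : ℕ) < k + l := ⟨Nat.le_add_right _ _, by omega⟩
        simp only [hτ, dif_pos hir]
        congr 1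
        exact Fin.ext (by simp)
      have hsplit := pSum_split hmetinv t hsum k l σ' τ hσ'0.2 h2
      have hτmem : τ ∈ BSet A k := by
        intro i hi
        by_cases hir : k ≤ i ∧ i < k + l
        · simp only [hτ, dif_pos hir]
          rcases hi with hi | hi
          · omega
          · refine hα0 ⟨i - k, by omega⟩ ?_
            simpa only [Nat.add_sub_cancel' hir.1] using hi
        · simp only [hτ, dif_neg hir]
          exact hσ'0.1 i hi
      refine ⟨τ, hτmem, ?_⟩
      rw [hsplit]
      congr 1
      exact Finset.sum_congr rfl fun i _ => by rw [hτk i]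
  · rintro u₁ hu₁ u₂ hu₂ hne
    rw [Set.disjoint_left]
    rintro x ⟨_, ⟨σ₁, hσ₁, rfl⟩, hx1⟩ ⟨_, ⟨σ₂, hσ₂, rfl⟩, hx2⟩
    rw [hU] at hu₁ hu₂
    obtain ⟨α₁, hα₁0, rfl⟩ := hu₁
    obtain ⟨α₂, hα₂0, rfl⟩ := hu₂
    -- build full sequences
    set τ₁ : ℕ → Bool := fun i =>
      if hi : k ≤ i ∧ i < k + l then α₁ ⟨i - k, by omega⟩ else σ₁ i with hτ₁
    set τ₂ : ℕ → Bool := fun i =>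
      if hi : k ≤ i ∧ i < k + l then α₂ ⟨i - k, by omega⟩ else σ₂ i with hτ₂
    have hτ₁k : ∀ i : Fin l, τ₁ (k + (i : ℕ)) = α₁ i := by
      intro i
      have hir : k ≤ k + (i : ℕ) ∧ k + (i : ℕ) < k + l := ⟨Nat.le_add_right _ _, by omega⟩
      simp only [hτ₁, dif_pos hir]
      congr 1
      exact Fin.ext (by simp)
    have hτ₂k : ∀ i : Fin l, τ₂ (k + (i : ℕ)) = α₂ i := by
      intro i
      have hir : k ≤ k + (i : ℕ) ∧ k + (i : ℕ) < k + l := ⟨Nat.le_add_right _ _, by omega⟩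
      simp only [hτ₂, dif_pos hir]
      congr 1
      exact Fin.ext (by simp)
    have hsplit₁ := pSum_split hmetinv t hsum k l σ₁ τ₁ hσ₁.2
      (fun i hi => by simp only [hτ₁, dif_neg hi])
    have hsplit₂ := pSum_split hmetinv t hsum k l σ₂ τ₂ hσ₂.2
      (fun i hi => by simp only [hτ₂, dif_neg hi])
    have he₁ : pSum t τ₁ = pSum t σ₁ + ∑ i : Fin l, if α₁ i then t (k + (i : ℕ)) else 0 := by
      rw [hsplit₁]
      congr 1
      exact Finset.sum_congr rfl fun i _ => by rw [hτ₁k i]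
    have he₂ : pSum t τ₂ = pSum t σ₂ + ∑ i : Fin l, if α₂ i then t (k + (i : ℕ)) else 0 := by
      rw [hsplit₂]
      congr 1
      exact Finset.sum_congr rfl fun i _ => by rw [hτ₂k i]
    have heq : pSum t τ₁ = pSum t τ₂ := by rw [he₁, he₂]; exact hx1.trans hx2.symm
    have hττ : τ₁ = τ₂ := hgood heq
    apply hne
    have hαα : α₁ = α₂ := by
      funext i
      rw [← hτ₁k i, ← hτ₂k i, hττ]
    rw [hαα]
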